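/- Let n be a positive integer, let S = [[λ, μ], [ν, ρ]] be a complex symplectic 2n×2n matrix (Sᵀ J S = J with J = [[0, I], [−I, 0]]) which maps K-positive vectors to K-positive vectors (vᴴ K v > 0 implies (Sv)ᴴ K (Sv) > 0, where K = [[I, 0], [0, −I]]), and let A be a complex symmetric n×n matrix with I − AᴴA positive definite. Then λ, λ + μA, and I + Aλ⁻¹μ are invertible and νλ⁻¹ + (λ⁻¹)ᵀ (I + Aλ⁻¹μ)⁻¹ A λ⁻¹ = (ρA + ν)(λ + μA)⁻¹. -/

import Mathlib

open Matrix
open scoped ComplexOrder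

/-- If `S = [[λ, μ], [ν, ρ]]` is complex symplectic mapping `K`-positive
vectors to `K`-positive vectors and `A` is complex symmetric with `I − AᴴA` positive
definite, then `λ`, `λ + μA`, and `I + Aλ⁻¹μ` are invertible and
`νλ⁻¹ + (λ⁻¹)ᵀ(I + Aλ⁻¹μ)⁻¹Aλ⁻¹ = (ρA + ν)(λ + μA)⁻¹`. -/
theorem semigroup_action_on_squeezed_states_formula (n : ℕ) (hn : 0 < n)
    (A lam mu nu rho : Matrix (Fin n) (Fin n) ℂ)
    (hS : (fromBlocks lam mu nu rho)ᵀ *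
        fromBlocks (0 : Matrix (Fin n) (Fin n) ℂ) (1 : Matrix (Fin n) (Fin n) ℂ)
          (-1 : Matrix (Fin n) (Fin n) ℂ) (0 : Matrix (Fin n) (Fin n) ℂ) *
        fromBlocks lam mu nu rho =
      fromBlocks (0 : Matrix (Fin n) (Fin n) ℂ) (1 : Matrix (Fin n) (Fin n) ℂ)
        (-1 : Matrix (Fin n) (Fin n) ℂ) (0 : Matrix (Fin n) (Fin n) ℂ))
    (hpos : ∀ v : (Fin n ⊕ Fin n) → ℂ,
      0 < star v ⬝ᵥ ((fromBlocks (1 : Matrix (Fin n) (Fin n) ℂ) 0 0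
          (-1 : Matrix (Fin n) (Fin n) ℂ)) *ᵥ v) →
      0 < star ((fromBlocks lam mu nu rho) *ᵥ v) ⬝ᵥ
        ((fromBlocks (1 : Matrix (Fin n) (Fin n) ℂ) 0 0
          (-1 : Matrix (Fin n) (Fin n) ℂ)) *ᵥ ((fromBlocks lam mu nu rho) *ᵥ v)))
    (hA : Aᵀ = A) (hApd : ((1 : Matrix (Fin n) (Fin n) ℂ) - Aᴴ * A).PosDef) :
    IsUnit lam ∧
    IsUnit (lam + mu * A) ∧
    IsUnit ((1 : Matrix (Fin n) (Fin n) ℂ) + A * lam⁻¹ * mu) ∧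
    nu * lam⁻¹ + (lam⁻¹)ᵀ * ((1 : Matrix (Fin n) (Fin n) ℂ) + A * lam⁻¹ * mu)⁻¹ * A * lam⁻¹ =
      (rho * A + nu) * (lam + mu * A)⁻¹ := by
  -- the K-quadratic form on a block vector
  have quad : ∀ x y : Fin n → ℂ,
      star (Sum.elim x y) ⬝ᵥ
        ((fromBlocks (1 : Matrix (Fin n) (Fin n) ℂ) 0 0 (-1 : Matrix (Fin n) (Fin n) ℂ))
          *ᵥ Sum.elim x y) = star x ⬝ᵥ x - star y ⬝ᵥ y := by
    intro x y
    have hst : star (Sum.elim x y) = Sum.elim (star x) (star y) := by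
      funext i; cases i <;> simp
    rw [hst, fromBlocks_mulVec]
    simp [sumElim_dotProduct_sumElim, sub_eq_add_neg, neg_mulVec, dotProduct_neg]
  have Smv : ∀ x y : Fin n → ℂ,
      (fromBlocks lam mu nu rho) *ᵥ Sum.elim x y =
        Sum.elim (lam *ᵥ x + mu *ᵥ y) (nu *ᵥ x + rho *ᵥ y) := by
    intro x y; rw [fromBlocks_mulVec]
    simp
  -- λ is invertible
  have hlam : IsUnit lam := by
    rw [Matrix.isUnit_iff_isUnit_det, isUnit_iff_ne_zero]
    intro hdet
    obtain ⟨v, hv, hmv⟩ := (Matrix.exists_mulVec_eq_zero_iff).mpr hdet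
    have h1 : 0 < star (Sum.elim v (0 : Fin n → ℂ)) ⬝ᵥ
        ((fromBlocks (1 : Matrix (Fin n) (Fin n) ℂ) 0 0 (-1 : Matrix (Fin n) (Fin n) ℂ))
          *ᵥ Sum.elim v 0) := by
      rw [quad]
      simpa using (Matrix.dotProduct_star_self_pos_iff).mpr hv
    have h2 := hpos _ h1
    rw [Smv, quad] at h2
    simp only [Matrix.mulVec_zero, add_zero, hmv] at h2
    rw [show star (0 : Fin n → ℂ) ⬝ᵥ (0 : Fin n → ℂ) = 0 by simp, zero_sub] at h2
    exact absurd (neg_pos.mp h2) (not_lt_of_ge (dotProduct_star_self_nonneg _))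
  have hlamd : IsUnit lam.det := (Matrix.isUnit_iff_isUnit_det _).mp hlam
  -- λ + μA is invertible
  have hC : IsUnit (lam + mu * A) := by
    rw [Matrix.isUnit_iff_isUnit_det, isUnit_iff_ne_zero]
    intro hdet
    obtain ⟨v, hv, hmv⟩ := (Matrix.exists_mulVec_eq_zero_iff).mpr hdet
    have hAv : star (A *ᵥ v) ⬝ᵥ (A *ᵥ v) = star v ⬝ᵥ ((Aᴴ * A) *ᵥ v) := by
      rw [← Matrix.mulVec_mulVec, Matrix.dotProduct_mulVec (star v), ← star_mulVec]
    have h1 : 0 < star (Sum.elim v (A *ᵥ v)) ⬝ᵥ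
        ((fromBlocks (1 : Matrix (Fin n) (Fin n) ℂ) 0 0 (-1 : Matrix (Fin n) (Fin n) ℂ))
          *ᵥ Sum.elim v (A *ᵥ v)) := by
      rw [quad, hAv]
      have := hApd.dotProduct_mulVec_pos hv
      rwa [Matrix.sub_mulVec, Matrix.one_mulVec, dotProduct_sub] at this
    have h2 := hpos _ h1
    rw [Smv, quad] at h2
    rw [show lam *ᵥ v + mu *ᵥ (A *ᵥ v) = (lam + mu * A) *ᵥ v by
      rw [Matrix.add_mulVec, Matrix.mulVec_mulVec], hmv] at h2
    rw [show star (0 : Fin n → ℂ) ⬝ᵥ (0 : Fin n → ℂ) = 0 by simp, zero_sub] at h2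
    exact absurd (neg_pos.mp h2) (not_lt_of_ge (dotProduct_star_self_nonneg _))
  -- 1 + Aλ⁻¹μ is invertible
  have hfac : lam⁻¹ * (lam + mu * A) = 1 + lam⁻¹ * mu * A := by
    rw [Matrix.mul_add, Matrix.nonsing_inv_mul _ hlamd, mul_assoc]
  have hB : IsUnit ((1 : Matrix (Fin n) (Fin n) ℂ) + A * lam⁻¹ * mu) := by
    rw [Matrix.isUnit_iff_isUnit_det]
    have hdet : ((1 : Matrix (Fin n) (Fin n) ℂ) + A * lam⁻¹ * mu).det =
        ((1 : Matrix (Fin n) (Fin n) ℂ) + lam⁻¹ * mu * A).det := by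
      rw [show (1 : Matrix (Fin n) (Fin n) ℂ) + A * lam⁻¹ * mu
            = 1 + A * (lam⁻¹ * mu) by rw [mul_assoc],
          show (1 : Matrix (Fin n) (Fin n) ℂ) + lam⁻¹ * mu * A
            = 1 + (lam⁻¹ * mu) * A by ring_nf,
          add_comm (1 : Matrix (Fin n) (Fin n) ℂ), add_comm (1 : Matrix (Fin n) (Fin n) ℂ),
          Matrix.det_mul_add_one_comm]
    rw [hdet, ← hfac, Matrix.det_mul]
    exact (Matrix.isUnit_nonsing_inv_det lam hlamd).mul ((Matrix.isUnit_iff_isUnit_det _).mp hC)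
  -- symplectic block relations
  have hsymp : lamᵀ * nu = nuᵀ * lam ∧ lamᵀ * rho = 1 + nuᵀ * mu := by
    rw [fromBlocks_transpose, fromBlocks_multiply, fromBlocks_multiply] at hS
    have h11 := congrArg Matrix.toBlocks₁₁ hS
    have h12 := congrArg Matrix.toBlocks₁₂ hS
    simp only [toBlocks_fromBlocks₁₁, toBlocks_fromBlocks₁₂, Matrix.mul_zero, Matrix.zero_mul,
      Matrix.mul_one, Matrix.one_mul, Matrix.mul_neg, Matrix.neg_mul, zero_add, add_zero,
      mul_neg_one, neg_one_mul] at h11 h12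
    rw [neg_add_eq_sub, sub_eq_zero] at h11
    rw [neg_add_eq_sub, sub_eq_iff_eq_add] at h12
    exact ⟨h11, h12⟩
  obtain ⟨h11, h12⟩ := hsymp
  refine ⟨hlam, hC, hB, ?_⟩
  -- the formula
  have hCd : IsUnit (lam + mu * A).det := (Matrix.isUnit_iff_isUnit_det _).mp hC
  have hBd : IsUnit ((1 : Matrix (Fin n) (Fin n) ℂ) + A * lam⁻¹ * mu).det :=
    (Matrix.isUnit_iff_isUnit_det _).mp hB
  have hlamT : IsUnit lamᵀ := by
    rw [Matrix.isUnit_iff_isUnit_det, Matrix.det_transpose]; exact hlamd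
  set B := (1 : Matrix (Fin n) (Fin n) ℂ) + A * lam⁻¹ * mu with hBdef
  -- step C : nu*lam⁻¹*mu*A + (lam⁻¹)ᵀ*A = rho*A
  have hTinv : lamᵀ * (lam⁻¹)ᵀ = 1 := by
    rw [← Matrix.transpose_mul, Matrix.nonsing_inv_mul _ hlamd, Matrix.transpose_one]
  have stepC : nu * lam⁻¹ * mu * A + (lam⁻¹)ᵀ * A = rho * A := by
    apply hlamT.mul_left_cancel
    rw [Matrix.mul_add]
    rw [show lamᵀ * (nu * lam⁻¹ * mu * A) = (lamᵀ * nu) * lam⁻¹ * mu * A by noncomm_ring,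
      h11, show nuᵀ * lam * lam⁻¹ * mu * A = nuᵀ * (lam * lam⁻¹) * mu * A by noncomm_ring,
      Matrix.mul_nonsing_inv _ hlamd,
      show lamᵀ * ((lam⁻¹)ᵀ * A) = (lamᵀ * (lam⁻¹)ᵀ) * A by noncomm_ring, hTinv,
      show lamᵀ * (rho * A) = (lamᵀ * rho) * A by noncomm_ring, h12]
    noncomm_ring
  -- step A : B⁻¹ * (A * lam⁻¹) * (lam + mu*A) = A
  have stepA : B⁻¹ * A * lam⁻¹ * (lam + mu * A) = A := by
    have h1 : A * lam⁻¹ * (lam + mu * A) = B * A := by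
      rw [Matrix.mul_add, hBdef]
      rw [show A * lam⁻¹ * lam = A * (lam⁻¹ * lam) by noncomm_ring, Matrix.nonsing_inv_mul _ hlamd]
      noncomm_ring
    calc B⁻¹ * A * lam⁻¹ * (lam + mu * A) = B⁻¹ * (A * lam⁻¹ * (lam + mu * A)) := by noncomm_ring
      _ = B⁻¹ * (B * A) := by rw [h1]
      _ = (B⁻¹ * B) * A := by noncomm_ring
      _ = A := by rw [Matrix.nonsing_inv_mul _ hBd, Matrix.one_mul]
  -- key identity
  have key : (nu * lam⁻¹ + (lam⁻¹)ᵀ * B⁻¹ * A * lam⁻¹) * (lam + mu * A) = rho * A + nu := by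
    rw [Matrix.add_mul]
    have e1 : nu * lam⁻¹ * (lam + mu * A) = nu + nu * lam⁻¹ * mu * A := by
      rw [Matrix.mul_add, show nu * lam⁻¹ * lam = nu * (lam⁻¹ * lam) by noncomm_ring,
        Matrix.nonsing_inv_mul _ hlamd]
      noncomm_ring
    have e2 : (lam⁻¹)ᵀ * B⁻¹ * A * lam⁻¹ * (lam + mu * A) = (lam⁻¹)ᵀ * A := by
      calc (lam⁻¹)ᵀ * B⁻¹ * A * lam⁻¹ * (lam + mu * A)
          = (lam⁻¹)ᵀ * (B⁻¹ * A * lam⁻¹ * (lam + mu * A)) := by noncomm_ring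
        _ = (lam⁻¹)ᵀ * A := by rw [stepA]
    rw [e1, e2, ← stepC]
    noncomm_ring
  calc nu * lam⁻¹ + (lam⁻¹)ᵀ * B⁻¹ * A * lam⁻¹
      = (nu * lam⁻¹ + (lam⁻¹)ᵀ * B⁻¹ * A * lam⁻¹) * ((lam + mu * A) * (lam + mu * A)⁻¹) := by
        rw [Matrix.mul_nonsing_inv _ hCd, Matrix.mul_one]
    _ = ((nu * lam⁻¹ + (lam⁻¹)ᵀ * B⁻¹ * A * lam⁻¹) * (lam + mu * A)) * (lam + mu * A)⁻¹ := by
        noncomm_ring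
    _ = (rho * A + nu) * (lam + mu * A)⁻¹ := by rw [key]
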